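/- Let P be a finite pure poset and, for 1 ≤ k ≤ h_P, set τ_k = {u ∈ P : h(u) < k}. Then each τ_k is an order ideal of P, and the edge set E of P̂ is the disjoint union of the sets E(τ_k) for k = 1, …, h_P. (On the Hibi toric variety this yields −K = Σ_{k=1}^{h_P} D_{E(τ_k)} ∼ h_P·D_{E(P)}.) -/

import Mathlib

/-- The bounded poset `P̂ = 0̂ ⊕ P ⊕ 1̂`. -/
abbrev Phat (P : Type*) := WithBot (WithTop P)

/-- The inclusion `P → P̂`. -/
def toHat {P : Type*} (u : P) : Phat P := ((u : WithTop P) : Phat P)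

/-- The set of edges (covering pairs) of `P̂`; for `e = (u ⋖ v)` we write
`t(e) = e.1` and `s(e) = e.2`. -/
def edgeSet (P : Type*) [PartialOrder P] : Set (Phat P × Phat P) :=
  {e | e.1 ⋖ e.2}

/-- Membership of `a ∈ P̂` in `{0̂} ∪ τ` for a subset `τ ⊆ P`. -/
def memHat {P : Type*} (τ : Set P) (a : Phat P) : Prop :=
  a = ⊥ ∨ ∃ u ∈ τ, a = toHat u

/-- For an order ideal `τ`, the subset `E(τ) = {e ∈ E : t(e) ∈ {0̂} ∪ τ, s(e) ∉ {0̂} ∪ τ}`. -/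
def edgeCut {P : Type*} [PartialOrder P] (τ : Set P) : Set (Phat P × Phat P) :=
  {e ∈ edgeSet P | memHat τ e.1 ∧ ¬ memHat τ e.2}

/-- A finite poset is pure if all of its maximal chains have the same cardinality. -/
def IsPurePoset (P : Type*) [PartialOrder P] : Prop :=
  ∀ C₁ C₂ : Set P, IsMaxChain (· ≤ ·) C₁ → IsMaxChain (· ≤ ·) C₂ →
    C₁.ncard = C₂.ncard

namespace HibiAux

variable {Q : Type*} [PartialOrder Q] [Finite Q]

/-- Maximal chain within a subset `S`. -/
def MaxChainIn (S C : Set Q) : Prop :=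
  C ⊆ S ∧ IsChain (· ≤ ·) C ∧
    ∀ ⦃C' : Set Q⦄, C' ⊆ S → IsChain (· ≤ ·) C' → C ⊆ C' → C = C'

lemma MaxChainIn.mem_of_insert {S C : Set Q} (h : MaxChainIn S C) {x : Q}
    (hx : x ∈ S) (hins : IsChain (· ≤ ·) (insert x C)) : x ∈ C := by
  have := h.2.2 (Set.insert_subset hx h.1) hins (Set.subset_insert _ _)
  rw [this]; exact Set.mem_insert _ _

lemma exists_maxChainIn {S C : Set Q} (hCS : C ⊆ S) (hC : IsChain (· ≤ ·) C) :
    ∃ M, MaxChainIn S M ∧ C ⊆ M := by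
  have hfin : {D : Set Q | C ⊆ D ∧ D ⊆ S ∧ IsChain (· ≤ ·) D}.Finite :=
    (Set.toFinite S).finite_subsets.subset (fun D hD => hD.2.1)
  obtain ⟨M, hM, hmax⟩ := Set.Finite.exists_maximalFor Set.ncard _ hfin
    ⟨C, subset_rfl, hCS, hC⟩
  refine ⟨M, ⟨hM.2.1, hM.2.2, fun C' hC'S hC' hMC' => ?_⟩, hM.1⟩
  have hC'mem : C' ∈ {D : Set Q | C ⊆ D ∧ D ⊆ S ∧ IsChain (· ≤ ·) D} :=
    ⟨hM.1.trans hMC', hC'S, hC'⟩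
  have hle : M.ncard ≤ C'.ncard := Set.ncard_le_ncard hMC' (Set.toFinite _)
  exact Set.eq_of_subset_of_ncard_le hMC' (hmax (j := C') hC'mem hle).ge (Set.toFinite _)

lemma exists_greatest_of_chain {C : Set Q} (hC : IsChain (· ≤ ·) C)
    (hne : C.Nonempty) : ∃ m ∈ C, ∀ x ∈ C, x ≤ m := by
  obtain ⟨m, hm, hmax⟩ := Set.Finite.exists_maximalFor id C (Set.toFinite C) hne
  refine ⟨m, hm, fun x hx => ?_⟩
  rcases eq_or_ne x m with rfl | hne'
  · exact le_rfl
  · rcases hC hx hm hne' with h | h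
    · exact h
    · exact (hmax (j := x) hx h).ge

lemma exists_ltSeries_of_chain : ∀ (n : ℕ) (C : Set Q), IsChain (· ≤ ·) C →
    C.ncard = n + 1 → ∀ a ∈ C, (∀ x ∈ C, x ≤ a) →
    ∃ p : LTSeries Q, p.last = a ∧ p.length = n := by
  intro n
  induction n with
  | zero =>
    intro C _ _ a ha _
    exact ⟨RelSeries.singleton _ a, RelSeries.last_singleton a, rfl⟩
  | succ n ih =>
    intro C hC hcard a ha hgreat
    have hC' : IsChain (· ≤ ·) (C \ {a}) := hC.mono Set.diff_subset
    have hsplit : C.ncard = (C \ {a}).ncard + 1 := by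
      rw [← Set.ncard_insert_of_notMem (fun h => h.2 rfl) (Set.toFinite _),
        Set.insert_diff_singleton, Set.insert_eq_of_mem ha]
    have hcard' : (C \ {a}).ncard = n + 1 := by omega
    have hne : (C \ {a}).Nonempty := by
      rw [← Set.ncard_pos (Set.toFinite _)]; omega
    obtain ⟨b, hb, hbgr⟩ := exists_greatest_of_chain hC' hne
    obtain ⟨p, hlast, hlen⟩ := ih (C \ {a}) hC' hcard' b hb
      (fun x hx => hbgr x hx)
    have hba : p.last < a := by
      rw [hlast]
      exact lt_of_le_of_ne (hgreat b hb.1) hb.2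
    exact ⟨p.snoc a hba, by simp, by simp [hlen]⟩

lemma height_ne_top (x : Q) : Order.height x ≠ ⊤ := by
  have : Fintype Q := Fintype.ofFinite Q
  have h : Order.height x ≤ (Fintype.card Q : ℕ∞) :=
    Order.height_le fun p _ => by exact_mod_cast p.length_lt_card.le
  exact ne_top_of_le_ne_top (by simp) h

lemma maxChainIn_Iic_mem {a : Q} {C : Set Q} (h : MaxChainIn (Set.Iic a) C) :
    a ∈ C :=
  h.mem_of_insert (le_refl a) (h.2.1.insert fun x hx _ => Or.inr (h.1 hx))

lemma glue_maxChain {a : Q} {C D : Set Q} (hC : MaxChainIn (Set.Iic a) C)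
    (hD : MaxChainIn (Set.Ici a) D) :
    IsMaxChain (· ≤ ·) (C ∪ D) ∧ C ∩ D = {a} := by
  have haC : a ∈ C := maxChainIn_Iic_mem hC
  have haD : a ∈ D :=
    hD.mem_of_insert (le_refl a) (hD.2.1.insert fun x hx _ => Or.inl (hD.1 hx))
  have hchain : IsChain (· ≤ ·) (C ∪ D) := by
    intro x hx y hy hxy
    rcases hx with hx | hx <;> rcases hy with hy | hy
    · exact hC.2.1 hx hy hxy
    · exact Or.inl ((hC.1 hx).trans (hD.1 hy))
    · exact Or.inr ((hC.1 hy).trans (hD.1 hx))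
    · exact hD.2.1 hx hy hxy
  refine ⟨⟨hchain, fun t ht hsub => ?_⟩, ?_⟩
  · refine (Set.Subset.antisymm hsub fun x hx => ?_)
    have hxa : x ≤ a ∨ a ≤ x := by
      rcases eq_or_ne x a with rfl | hne
      · exact Or.inl le_rfl
      · exact ht hx (hsub (Or.inl haC)) hne
    rcases hxa with hxa | hxa
    · exact Or.inl (hC.mem_of_insert hxa
        (ht.mono (Set.insert_subset hx ((Set.subset_union_left).trans hsub))))
    · exact Or.inr (hD.mem_of_insert hxa
        (ht.mono (Set.insert_subset hx ((Set.subset_union_right).trans hsub))))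
  · apply Set.Subset.antisymm
    · rintro x ⟨hx1, hx2⟩
      exact le_antisymm (hC.1 hx1) (hD.1 hx2)
    · rintro x rfl
      exact ⟨haC, haD⟩

/-- In a pure finite poset, every maximal chain of `Set.Iic a` has
cardinality `height a + 1`. -/
lemma ncard_maxChainIn_Iic
    (hpure : ∀ C₁ C₂ : Set Q, IsMaxChain (· ≤ ·) C₁ → IsMaxChain (· ≤ ·) C₂ →
      C₁.ncard = C₂.ncard)
    {a : Q} {C : Set Q} (hC : MaxChainIn (Set.Iic a) C) :
    C.ncard = (Order.height a).toNat + 1 := by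
  set n := (Order.height a).toNat with hn
  have hht : Order.height a = (n : ℕ∞) := (ENat.coe_toNat (height_ne_top a)).symm
  -- upper bound for any maximal chain in `Iic a`
  have hub : ∀ ⦃C' : Set Q⦄, MaxChainIn (Set.Iic a) C' → C'.ncard ≤ n + 1 := by
    intro C' hC'
    have haC' : a ∈ C' := maxChainIn_Iic_mem hC'
    have hpos : 0 < C'.ncard := (Set.ncard_pos (Set.toFinite _)).mpr ⟨a, haC'⟩
    obtain ⟨p, hlast, hlen⟩ := exists_ltSeries_of_chain (C'.ncard - 1) C' hC'.2.1
      (by omega) a haC' (fun x hx => hC'.1 hx)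
    have := Order.length_le_height_last (p := p)
    rw [hlast, hlen, hht] at this
    have : C'.ncard - 1 ≤ n := by exact_mod_cast this
    omega
  -- there is a maximal chain in `Iic a` of cardinality `n + 1`
  obtain ⟨p, hplast, hplen⟩ := Order.exists_series_of_height_eq_coe a hht
  have hrange : Set.range p.toFun ⊆ Set.Iic a := by
    rintro x ⟨i, rfl⟩
    rw [← hplast]
    exact p.strictMono.monotone (Fin.le_last i)
  obtain ⟨M, hM, hsubM⟩ := exists_maxChainIn hrange p.strictMono.monotone.isChain_range
  have hMcard : M.ncard = n + 1 := by
    have h1 : n + 1 ≤ M.ncard := by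
      have : (Set.range p.toFun).ncard = n + 1 := by
        rw [← Set.image_univ, Set.ncard_image_of_injective _ p.strictMono.injective,
          Set.ncard_univ, Nat.card_eq_fintype_card, Fintype.card_fin, hplen]
      rw [← this]
      exact Set.ncard_le_ncard hsubM (Set.toFinite _)
    exact le_antisymm (hub hM) h1
  -- all maximal chains in `Iic a` have the same cardinality
  obtain ⟨D, hD, -⟩ := exists_maxChainIn (Set.singleton_subset_iff.mpr (Set.mem_Ici.mpr le_rfl))
    (Set.subsingleton_singleton.isChain : IsChain (· ≤ ·) {a})
  obtain ⟨hCD, hCDint⟩ := glue_maxChain hC hD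
  obtain ⟨hMD, hMDint⟩ := glue_maxChain hM hD
  have h1 := Set.ncard_union_add_ncard_inter C D (Set.toFinite _) (Set.toFinite _)
  have h2 := Set.ncard_union_add_ncard_inter M D (Set.toFinite _) (Set.toFinite _)
  rw [hCDint, Set.ncard_singleton] at h1
  rw [hMDint, Set.ncard_singleton] at h2
  have h3 : (C ∪ D).ncard = (M ∪ D).ncard := hpure _ _ hCD hMD
  omega

/-- Key lemma: in a pure finite poset, covering relations raise height by one. -/
lemma height_covBy
    (hpure : ∀ C₁ C₂ : Set Q, IsMaxChain (· ≤ ·) C₁ → IsMaxChain (· ≤ ·) C₂ →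
      C₁.ncard = C₂.ncard)
    {a b : Q} (hab : a ⋖ b) :
    Order.height b = Order.height a + 1 := by
  obtain ⟨C, hC, -⟩ := exists_maxChainIn (Set.singleton_subset_iff.mpr (Set.mem_Iic.mpr le_rfl))
    (Set.subsingleton_singleton.isChain : IsChain (· ≤ ·) ({a} : Set Q))
  have haC : a ∈ C := maxChainIn_Iic_mem hC
  have hbC : b ∉ C := fun h => absurd (hC.1 h) (not_le_of_gt hab.lt)
  have hC' : MaxChainIn (Set.Iic b) (insert b C) := by
    refine ⟨Set.insert_subset le_rfl (fun x hx => le_of_lt (lt_of_le_of_lt (hC.1 hx) hab.lt)),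
      hC.2.1.insert (fun x hx _ => Or.inr (le_of_lt (lt_of_le_of_lt (hC.1 hx) hab.lt))),
      fun t htb ht hsub => ?_⟩
    refine Set.Subset.antisymm hsub fun x hx => ?_
    have hxa : x ≤ a ∨ a ≤ x := by
      rcases eq_or_ne x a with rfl | hne
      · exact Or.inl le_rfl
      · exact ht hx (hsub (Set.mem_insert_of_mem _ haC)) hne
    rcases hxa with hxa | hxa
    · exact Set.mem_insert_of_mem _ (hC.mem_of_insert hxa
        (ht.mono (Set.insert_subset hx ((Set.subset_insert _ _).trans hsub))))
    · rcases eq_or_lt_of_le hxa with rfl | hax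
      · exact Set.mem_insert_of_mem _ haC
      · have hxb : x ≤ b := htb hx
        rcases eq_or_lt_of_le hxb with rfl | hxb'
        · exact Set.mem_insert _ _
        · exact absurd hxb' (hab.2 hax)
  have e1 := ncard_maxChainIn_Iic hpure hC
  have e2 := ncard_maxChainIn_Iic hpure hC'
  rw [Set.ncard_insert_of_notMem hbC (Set.toFinite _), e1] at e2
  have hhta : Order.height a = ((Order.height a).toNat : ℕ∞) :=
    (ENat.coe_toNat (height_ne_top a)).symm
  have hhtb : Order.height b = ((Order.height b).toNat : ℕ∞) :=
    (ENat.coe_toNat (height_ne_top b)).symm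
  rw [hhta, hhtb]
  have : (Order.height b).toNat = (Order.height a).toNat + 1 := by omega
  rw [this]
  push_cast
  ring

end HibiAux

section Transfer

variable {P : Type*} [PartialOrder P]

instance phatFinite [Finite P] : Finite (Phat P) := by
  haveI := Fintype.ofFinite P
  exact inferInstanceAs (Finite (Option (Option P)))

lemma toHat_le_toHat {u v : P} : toHat u ≤ toHat v ↔ u ≤ v := by
  simp [toHat]

lemma toHat_injective : Function.Injective (toHat (P := P)) := by
  intro u v h
  simpa [toHat] using h

lemma phat_cases (a : Phat P) :
    a = ⊥ ∨ a = ((⊤ : WithTop P) : Phat P) ∨ ∃ u, a = toHat u := by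
  rcases a with _ | a
  · exact Or.inl rfl
  rcases a with _ | u
  · exact Or.inr (Or.inl rfl)
  · exact Or.inr (Or.inr ⟨u, rfl⟩)

/-- Purity transfers from `P` to `Phat P`. -/
lemma isPure_phat [Finite P] (hpure : IsPurePoset P) :
    ∀ C₁ C₂ : Set (Phat P), IsMaxChain (· ≤ ·) C₁ → IsMaxChain (· ≤ ·) C₂ →
      C₁.ncard = C₂.ncard := by
  have key : ∀ C : Set (Phat P), IsMaxChain (· ≤ ·) C →
      ∃ D : Set P, IsMaxChain (· ≤ ·) D ∧ C.ncard = D.ncard + 2 := by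
    intro C hC
    set D : Set P := {u | toHat u ∈ C} with hD
    have htop : ((⊤ : WithTop P) : Phat P) ∈ C := by
      have hins : IsChain (· ≤ ·) (insert ((⊤ : WithTop P) : Phat P) C) :=
        hC.1.insert fun x _ _ => Or.inr (by
          rcases x with _ | y
          · exact bot_le
          · exact WithBot.coe_le_coe.mpr le_top)
      have h := hC.2 hins (Set.subset_insert _ _)
      rw [h]; exact Set.mem_insert _ _
    have hbot : (⊥ : Phat P) ∈ C := by
      have hins : IsChain (· ≤ ·) (insert (⊥ : Phat P) C) :=
        hC.1.insert fun x _ _ => Or.inl bot_le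
      have h := hC.2 hins (Set.subset_insert _ _)
      rw [h]; exact Set.mem_insert _ _
    have hDchain : IsChain (· ≤ ·) D := by
      intro u hu v hv huv
      have := hC.1 hu hv (fun h => huv (toHat_injective h))
      rcases this with h | h
      · exact Or.inl (toHat_le_toHat.mp h)
      · exact Or.inr (toHat_le_toHat.mp h)
    have hDmax : IsMaxChain (· ≤ ·) D := by
      refine ⟨hDchain, fun s hs hsub => ?_⟩
      refine Set.Subset.antisymm hsub fun w hw => ?_
      have hins : IsChain (· ≤ ·) (insert (toHat w) C) := by
        refine hC.1.insert fun x hx hne => ?_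
        rcases x with _ | x
        · exact Or.inr bot_le
        rcases x with _ | u
        · exact Or.inl (WithBot.coe_le_coe.mpr le_top)
        · have hu : u ∈ D := hx
          have : w = u ∨ w ≠ u := eq_or_ne w u
          rcases this with rfl | hwu
          · exact Or.inl le_rfl
          · rcases hs hw (hsub hu) hwu with h | h
            · exact Or.inl (toHat_le_toHat.mpr h)
            · exact Or.inr (toHat_le_toHat.mpr h)
      have := hC.2 hins (Set.subset_insert _ _)
      have hmem : toHat w ∈ C := by rw [this]; exact Set.mem_insert _ _
      exact hmem
    refine ⟨D, hDmax, ?_⟩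
    have hCeq : C = insert (⊥ : Phat P) (insert ((⊤ : WithTop P) : Phat P) (toHat '' D)) := by
      apply Set.Subset.antisymm
      · intro x hx
        rcases x with _ | x
        · exact Set.mem_insert _ _
        rcases x with _ | u
        · exact Set.mem_insert_of_mem _ (Set.mem_insert _ _)
        · exact Set.mem_insert_of_mem _ (Set.mem_insert_of_mem _ ⟨u, hx, rfl⟩)
      · intro x hx
        rcases hx with rfl | hx
        · exact hbot
        rcases hx with rfl | hx
        · exact htop
        · obtain ⟨u, hu, rfl⟩ := hx
          exact hu
    rw [hCeq]
    have h1 : ((⊤ : WithTop P) : Phat P) ∉ toHat '' D := by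
      rintro ⟨u, -, h⟩
      simp [toHat] at h
    have h2 : (⊥ : Phat P) ∉ insert ((⊤ : WithTop P) : Phat P) (toHat '' D) := by
      rintro (h | ⟨u, -, h⟩) <;> simp [toHat] at h
    rw [Set.ncard_insert_of_notMem h2 (Set.toFinite _),
      Set.ncard_insert_of_notMem h1 (Set.toFinite _),
      Set.ncard_image_of_injective _ toHat_injective]
  intro C₁ C₂ h₁ h₂
  obtain ⟨D₁, hD₁, e₁⟩ := key C₁ h₁
  obtain ⟨D₂, hD₂, e₂⟩ := key C₂ h₂
  rw [e₁, e₂, hpure D₁ D₂ hD₁ hD₂]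

end Transfer

/-- For a finite pure poset `P` and `τ_k = {u ∈ P : h(u) < k}` (heights taken in `P̂`),
each `τ_k` is an order ideal of `P`, and the edge set `E` of `P̂` is the disjoint union
of the sets `E(τ_k)`, `k = 1, …, h_P`.  On the Hibi toric variety this yields
`−K = ∑_{k=1}^{h_P} D_{E(τ_k)} ∼ h_P · D_{E(P)}`. -/
theorem edgeSet_disjoint_union_of_pure (P : Type*) [PartialOrder P] [Fintype P]
    (hpure : IsPurePoset P) :
    (∀ k : ℕ, k ∈ Finset.Icc 1 (Order.height (⊤ : Phat P)).toNat →
      IsLowerSet {u : P | Order.height (toHat u) < (k : ℕ∞)}) ∧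
    (∀ e ∈ edgeSet P, ∃! k : ℕ,
      k ∈ Finset.Icc 1 (Order.height (⊤ : Phat P)).toNat ∧
      e ∈ edgeCut {u : P | Order.height (toHat u) < (k : ℕ∞)}) := by
  have hpure' := isPure_phat hpure
  constructor
  · intro k _ u v huv hv
    exact lt_of_le_of_lt (Order.height_mono (toHat_le_toHat.mpr huv)) hv
  · rintro ⟨a, b⟩ he
    have hab : a ⋖ b := he
    have hkey : Order.height b = Order.height a + 1 := HibiAux.height_covBy hpure' hab
    have hbne : Order.height b ≠ ⊤ := HibiAux.height_ne_top b
    have hane : Order.height a ≠ ⊤ := HibiAux.height_ne_top a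
    set k := (Order.height b).toNat with hk
    have hhb : Order.height b = (k : ℕ∞) := (ENat.coe_toNat hbne).symm
    have hha : Order.height a = ((Order.height a).toNat : ℕ∞) := (ENat.coe_toNat hane).symm
    have hka : k = (Order.height a).toNat + 1 := by
      have := hkey
      rw [hhb, hha] at this
      exact_mod_cast this
    have hk1 : 1 ≤ k := by omega
    have hbtop : Order.height b ≤ Order.height (⊤ : Phat P) := Order.height_mono le_top
    have hktop : k ≤ (Order.height (⊤ : Phat P)).toNat := by
      have := ENat.toNat_le_toNat hbtop (HibiAux.height_ne_top _)
      omega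
    -- `a` is not `⊤`
    have hanetop : a ≠ ((⊤ : WithTop P) : Phat P) := by
      rintro rfl
      have hble : b ≤ ((⊤ : WithTop P) : Phat P) := by
        rcases phat_cases (P := P) b with rfl | rfl | ⟨v, rfl⟩
        · exact bot_le
        · exact le_rfl
        · exact WithBot.coe_le_coe.mpr le_top
      exact absurd hab.lt (not_lt_of_ge hble)
    refine ⟨k, ⟨Finset.mem_Icc.mpr ⟨hk1, hktop⟩, he, ?_, ?_⟩, ?_⟩
    · -- memHat τ_k a
      rcases phat_cases (P := P) a with ha | ha | ⟨u, ha⟩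
      · exact Or.inl ha
      · exact absurd ha hanetop
      · refine Or.inr ⟨u, ?_, ha⟩
        show Order.height (toHat u) < (k : ℕ∞)
        rw [← ha, hha]
        exact_mod_cast (by omega : (Order.height a).toNat < k)
    · -- ¬ memHat τ_k b
      rintro (h0 | ⟨v, hv, hb⟩)
      · have hb0 : b = ⊥ := h0
        rw [hb0] at hab
        exact absurd hab.lt (not_lt_bot)
      · have hlt : Order.height (toHat v) < (k : ℕ∞) := hv
        rw [← show b = toHat v from hb, ← hhb] at hlt
        exact lt_irrefl _ hlt
    · -- uniqueness
      rintro k' ⟨hk'mem, -, hmem, hnmem⟩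
      rw [Finset.mem_Icc] at hk'mem
      -- from hmem : height a < k'
      have hlow : Order.height a < (k' : ℕ∞) := by
        rcases hmem with h0 | ⟨u, hu, ha'⟩
        · have hb0 : a = ⊥ := h0
          rw [hb0, Order.height_eq_zero.mpr isMin_bot]
          exact_mod_cast Nat.pos_of_ne_zero (by omega)
        · rw [show a = toHat u from ha']
          exact hu
      -- from hnmem / Icc : k' ≤ height b
      have hhigh : (k' : ℕ∞) ≤ Order.height b := by
        rcases phat_cases (P := P) b with rfl | rfl | ⟨v, rfl⟩
        · exact absurd hab.lt (not_lt_bot)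
        · -- b = ⊤
          have htopeq : ((⊤ : WithTop P) : Phat P) = (⊤ : Phat P) := rfl
          rw [htopeq]
          calc (k' : ℕ∞) ≤ ((Order.height (⊤ : Phat P)).toNat : ℕ∞) := by
                exact_mod_cast hk'mem.2
            _ = Order.height (⊤ : Phat P) := ENat.coe_toNat (HibiAux.height_ne_top _)
        · -- b = toHat v
          by_contra hcon
          push_neg at hcon
          exact hnmem (Or.inr ⟨v, hcon, rfl⟩)
      rw [hkey] at hhigh
      rw [hha] at hlow hhigh
      have h1 : (Order.height a).toNat < k' := by exact_mod_cast hlow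
      have h2 : k' ≤ (Order.height a).toNat + 1 := by exact_mod_cast hhigh
      omega
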